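/- A linear operator Q : ℝ[x₁,…,xₙ] → ℝ[x₁,…,xₙ] is shift-invariant if and only if there exists a family of real numbers (a_α) indexed by multi-indices α ∈ ℕⁿ such that for every polynomial p, Q p = Σ_α a_α·(∂^α p), where the sum has only finitely many nonzero terms (it suffices to sum over |α| ≤ deg p); in that case necessarily a_α = (Q(x^α)) evaluated at 0, divided by α!. -/

import Mathlib

noncomputable section

open scoped BigOperators
open MvPolynomial

/-- the shift operator `τ_y : p(x) ↦ p(x + y)`. -/
def shiftOp (n : ℕ) (y : Fin n → ℝ) :
    MvPolynomial (Fin n) ℝ →ₗ[ℝ] MvPolynomial (Fin n) ℝ :=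
  (aeval fun j => X j + C (y j)).toLinearMap

/-- the iterated formal partial derivative `∂^α = ∂₁^{α₁} ⋯ ∂ₙ^{αₙ}`. -/
def pderivPow (n : ℕ) (α : Fin n → ℕ) :
    MvPolynomial (Fin n) ℝ →ₗ[ℝ] MvPolynomial (Fin n) ℝ :=
  (List.ofFn fun j : Fin n =>
    (((pderiv j : Derivation ℝ (MvPolynomial (Fin n) ℝ)
        (MvPolynomial (Fin n) ℝ)).toLinearMap :
      Module.End ℝ (MvPolynomial (Fin n) ℝ)) ^ (α j))).prod

namespace ShiftExp

variable {n : ℕ}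

lemma shiftOp_mul (y : Fin n → ℝ) (p q : MvPolynomial (Fin n) ℝ) :
    shiftOp n y (p * q) = shiftOp n y p * shiftOp n y q := by
  simp [shiftOp]

lemma shiftOp_C (y : Fin n → ℝ) (a : ℝ) : shiftOp n y (C a) = C a := by simp [shiftOp]

lemma shiftOp_one (y : Fin n → ℝ) : shiftOp n y 1 = 1 := by simp [shiftOp]

lemma shiftOp_X (y : Fin n → ℝ) (i : Fin n) :
    shiftOp n y (X i) = X i + C (y i) := by simp [shiftOp]

/-- shift commutes with pderiv -/
lemma pderiv_shiftOp (y : Fin n → ℝ) (j : Fin n) (p : MvPolynomial (Fin n) ℝ) :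
    pderiv j (shiftOp n y p) = shiftOp n y (pderiv j p) := by
  induction p using MvPolynomial.induction_on with
  | C a => simp [shiftOp_C]
  | add p q hp hq => simp [map_add, hp, hq]
  | mul_X p i hp =>
    simp only [shiftOp_mul, shiftOp_X, pderiv_mul, map_add, pderiv_C, hp, add_zero]
    by_cases h : j = i
    · subst h; simp only [pderiv_X_self, shiftOp_C, shiftOp_one, mul_one]
    · simp [pderiv_X, h, shiftOp_C]

lemma list_prod_comm {M : Type*} [AddCommMonoid M] [Module ℝ M] (S : M →ₗ[ℝ] M)
    (l : List (Module.End ℝ M)) (h : ∀ f ∈ l, ∀ x, f (S x) = S (f x)) (x : M) :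
    l.prod (S x) = S (l.prod x) := by
  induction l generalizing x with
  | nil => simp
  | cons a t ih =>
    simp only [List.prod_cons, Module.End.mul_apply]
    rw [ih (fun f hf => h f (List.mem_cons_of_mem a hf)), h a (List.mem_cons_self (a := a) (l := t))]

lemma pow_comm_apply {M : Type*} [AddCommMonoid M] [Module ℝ M] (S : M →ₗ[ℝ] M)
    (f : Module.End ℝ M) (h : ∀ x, f (S x) = S (f x)) (k : ℕ) (x : M) :
    (f ^ k) (S x) = S ((f ^ k) x) := by
  induction k generalizing x with
  | zero => simp
  | succ k ih => rw [pow_succ, Module.End.mul_apply, Module.End.mul_apply, h, ih]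

lemma pderivPow_shiftOp (y : Fin n → ℝ) (α : Fin n → ℕ) (p : MvPolynomial (Fin n) ℝ) :
    pderivPow n α (shiftOp n y p) = shiftOp n y (pderivPow n α p) := by
  refine list_prod_comm (shiftOp n y) _ ?_ p
  intro f hf x
  rw [List.mem_ofFn] at hf
  obtain ⟨j, rfl⟩ := hf
  exact pow_comm_apply _ _ (fun x => pderiv_shiftOp y j x) _ x


lemma pderiv_pow_monomial (j : Fin n) (k : ℕ) (s : Fin n →₀ ℕ) (c : ℝ) :
    (((pderiv j : Derivation ℝ (MvPolynomial (Fin n) ℝ)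
        (MvPolynomial (Fin n) ℝ)).toLinearMap :
      Module.End ℝ (MvPolynomial (Fin n) ℝ)) ^ k) (monomial s c)
      = monomial (s - Finsupp.single j k) (c * ((s j).descFactorial k : ℝ)) := by
  induction k with
  | zero => simp
  | succ k ih =>
    rw [pow_succ', Module.End.mul_apply, ih]
    simp only [Derivation.coeFn_coe, pderiv_monomial]
    rw [Finsupp.tsub_apply, Finsupp.single_eq_same]
    congr 1
    · rw [tsub_tsub, ← Finsupp.single_add]
    · rw [Nat.descFactorial_succ]
      push_cast
      ring


def fsupp (α : Fin n → ℕ) : Fin n →₀ ℕ := Finsupp.equivFunOnFinite.symm α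

@[simp] lemma fsupp_apply (α : Fin n → ℕ) (i : Fin n) : fsupp α i = α i := rfl

lemma sum_single_eq_fsupp (α : Fin n → ℕ) :
    ∑ j : Fin n, Finsupp.single j (α j) = fsupp α := by
  ext i
  rw [Finsupp.finset_sum_apply]
  simp [Finsupp.single_apply]

lemma list_prod_monomial (α : Fin n → ℕ) (s : Fin n →₀ ℕ) (c : ℝ) :
    ∀ L : List (Fin n), L.Nodup →
    ((L.map fun j : Fin n =>
      (((pderiv j : Derivation ℝ (MvPolynomial (Fin n) ℝ)
          (MvPolynomial (Fin n) ℝ)).toLinearMap :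
        Module.End ℝ (MvPolynomial (Fin n) ℝ)) ^ (α j))).prod) (monomial s c)
      = monomial (s - ∑ j ∈ L.toFinset, Finsupp.single j (α j))
          (c * ∏ j ∈ L.toFinset, ((s j).descFactorial (α j) : ℝ)) := by
  intro L
  induction L with
  | nil => simp
  | cons j T ih =>
    intro hnd
    have hj : j ∉ T := (List.nodup_cons.mp hnd).1
    have hjT : j ∉ T.toFinset := by simpa using hj
    rw [List.map_cons, List.prod_cons, Module.End.mul_apply,
      ih (List.nodup_cons.mp hnd).2, pderiv_pow_monomial]
    have happ : (s - ∑ i ∈ T.toFinset, Finsupp.single i (α i)) j = s j := by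
      rw [Finsupp.tsub_apply, Finsupp.finset_sum_apply]
      rw [Finset.sum_eq_zero, Nat.sub_zero]
      intro i hi
      exact Finsupp.single_eq_of_ne (fun h => hjT (h ▸ hi))
    rw [happ, List.toFinset_cons, Finset.sum_insert hjT, Finset.prod_insert hjT,
      tsub_tsub, add_comm (Finsupp.single j (α j))]
    ring_nf

lemma pderivPow_monomial (α : Fin n → ℕ) (s : Fin n →₀ ℕ) (c : ℝ) :
    pderivPow n α (monomial s c)
      = monomial (s - fsupp α) (c * ∏ j : Fin n, ((s j).descFactorial (α j) : ℝ)) := by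
  have : pderivPow n α = ((List.finRange n).map fun j : Fin n =>
      (((pderiv j : Derivation ℝ (MvPolynomial (Fin n) ℝ)
          (MvPolynomial (Fin n) ℝ)).toLinearMap :
        Module.End ℝ (MvPolynomial (Fin n) ℝ)) ^ (α j))).prod := by
    rw [pderivPow, List.ofFn_eq_map]
  rw [this, list_prod_monomial α s c _ (List.nodup_finRange n),
    List.toFinset_finRange, sum_single_eq_fsupp]


lemma eval_zero_pderivPow_monomial (α : Fin n → ℕ) (s : Fin n →₀ ℕ) (c : ℝ) :
    eval (0 : Fin n → ℝ) (pderivPow n α (monomial s c))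
      = (∏ j, ((α j).factorial : ℝ)) * (if s = fsupp α then c else 0) := by
  rw [pderivPow_monomial, eval_zero, constantCoeff_monomial]
  by_cases h : s = fsupp α
  · rw [if_pos h, if_pos (by rw [h, tsub_self])]
    subst h
    simp only [fsupp_apply, Nat.descFactorial_self]
    ring
  · rw [if_neg h]
    split_ifs with h0
    · have hle : ∀ j, s j ≤ α j := by
        intro j
        have := congrArg (fun f : Fin n →₀ ℕ => f j) h0
        simp only [Finsupp.tsub_apply, fsupp_apply, Finsupp.coe_zero, Pi.zero_apply] at this
        omega
      have : ∃ j, s j < α j := by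
        by_contra hc
        push_neg at hc
        exact h (Finsupp.ext fun j => le_antisymm (hle j) (hc j))
      obtain ⟨j, hj⟩ := this
      rw [Finset.prod_eq_zero (Finset.mem_univ j)
        (by rw [Nat.descFactorial_eq_zero_iff_lt.2 hj]; exact Nat.cast_zero)]
      ring
    · ring

lemma eval_zero_pderivPow (α : Fin n → ℕ) (q : MvPolynomial (Fin n) ℝ) :
    eval (0 : Fin n → ℝ) (pderivPow n α q)
      = (∏ j, ((α j).factorial : ℝ)) * coeff (fsupp α) q := by
  conv_lhs => rw [q.as_sum, map_sum, map_sum]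
  rw [Finset.sum_congr rfl (fun s _ => eval_zero_pderivPow_monomial α s _), ← Finset.mul_sum]
  congr 1
  rw [Finset.sum_ite_eq' q.support (fsupp α) (fun s => coeff s q)]
  split_ifs with h
  · rfl
  · exact (notMem_support_iff.mp h).symm


/-- the index set -/
def idxSet (n d : ℕ) : Finset (Fin n → ℕ) :=
  (Fintype.piFinset fun _ : Fin n => Finset.range (d + 1)).filter
    (fun α => ∑ j : Fin n, α j ≤ d)

lemma sum_fsupp (s : Fin n →₀ ℕ) : ∑ j : Fin n, s j = s.sum fun _ e => e :=
  (Finsupp.sum_fintype s (fun _ e => e) (fun _ => rfl)).symm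

lemma mem_idxSet_of_support {q : MvPolynomial (Fin n) ℝ} {d : ℕ} (hd : q.totalDegree ≤ d)
    {s : Fin n →₀ ℕ} (hs : s ∈ q.support) : ⇑s ∈ idxSet n d := by
  have hsum : ∑ j : Fin n, s j ≤ d := by
    rw [sum_fsupp]
    exact (le_totalDegree hs).trans hd
  rw [idxSet, Finset.mem_filter, Fintype.mem_piFinset]
  refine ⟨fun j => Finset.mem_range.2 (Nat.lt_succ_of_le ?_), hsum⟩
  exact le_trans (Finset.single_le_sum (f := fun j => s j) (fun _ _ => Nat.zero_le _)
    (Finset.mem_univ j)) hsum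

lemma sum_monomial_eq (q : MvPolynomial (Fin n) ℝ) {d : ℕ} (hd : q.totalDegree ≤ d) :
    ∑ α ∈ idxSet n d, monomial (fsupp α) (coeff (fsupp α) q) = q := by
  have hinj : Set.InjOn (fun α : Fin n → ℕ => fsupp α) (idxSet n d) :=
    fun a _ b _ h => Finsupp.equivFunOnFinite.symm.injective h
  have himg : ∑ s0 ∈ (idxSet n d).image (fun α => fsupp α), monomial s0 (coeff s0 q)
      = ∑ α ∈ idxSet n d, monomial (fsupp α) (coeff (fsupp α) q) :=
    Finset.sum_image (fun a ha b hb h => hinj ha hb h)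
  rw [← himg]
  conv_rhs => rw [q.as_sum]
  refine (Finset.sum_subset ?_ ?_).symm
  · intro s hs
    rw [Finset.mem_image]
    exact ⟨⇑s, mem_idxSet_of_support hd hs, Finsupp.equivFunOnFinite_symm_coe s⟩
  · intro s _ hs
    rw [notMem_support_iff.mp hs, map_zero]

lemma totalDegree_shiftOp_le (y : Fin n → ℝ) (p : MvPolynomial (Fin n) ℝ) :
    (shiftOp n y p).totalDegree ≤ p.totalDegree := by
  conv_lhs => rw [p.as_sum, map_sum]
  refine (totalDegree_finset_sum _ _).trans (Finset.sup_le fun s hs => ?_)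
  have : shiftOp n y (monomial s (coeff s p))
      = C (coeff s p) * ∏ i ∈ s.support, (X i + C (y i)) ^ s i := by
    rw [shiftOp, AlgHom.toLinearMap_apply, monomial_eq, Finsupp.prod, map_mul, map_prod]
    simp
  rw [this]
  refine (totalDegree_mul _ _).trans ?_
  rw [totalDegree_C, zero_add]
  refine (totalDegree_finset_prod _ _).trans ?_
  have hterm : ∀ i ∈ s.support,
      ((X i + C (y i) : MvPolynomial (Fin n) ℝ) ^ s i).totalDegree ≤ s i * 1 := fun i _ =>
    (totalDegree_pow _ _).trans (Nat.mul_le_mul_left _ ((totalDegree_add _ _).trans (by simp)))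
  calc ∑ i ∈ s.support, ((X i + C (y i)) ^ s i).totalDegree
      ≤ ∑ i ∈ s.support, s i * 1 :=
      Finset.sum_le_sum (f := fun i => ((X i + C (y i) : MvPolynomial (Fin n) ℝ) ^ s i).totalDegree) hterm
    _ = s.sum fun _ e => e := by simp [Finsupp.sum]
    _ ≤ p.totalDegree := le_totalDegree hs

lemma shiftOp_neg_shiftOp (y : Fin n → ℝ) (p : MvPolynomial (Fin n) ℝ) :
    shiftOp n (-y) (shiftOp n y p) = p := by
  rw [shiftOp, shiftOp, AlgHom.toLinearMap_apply, AlgHom.toLinearMap_apply,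
    ← AlgHom.comp_apply, comp_aeval]
  simp

lemma totalDegree_shiftOp (y : Fin n → ℝ) (p : MvPolynomial (Fin n) ℝ) :
    (shiftOp n y p).totalDegree = p.totalDegree := by
  refine le_antisymm (totalDegree_shiftOp_le y p) ?_
  conv_lhs => rw [← shiftOp_neg_shiftOp y p]
  exact totalDegree_shiftOp_le _ _

lemma eval_zero_shiftOp (y : Fin n → ℝ) (p : MvPolynomial (Fin n) ℝ) :
    eval (0 : Fin n → ℝ) (shiftOp n y p) = eval y p := by
  induction p using MvPolynomial.induction_on with
  | C a => simp [shiftOp_C]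
  | add p q hp hq => rw [map_add, map_add, map_add, hp, hq]
  | mul_X p i hp => rw [shiftOp_mul, shiftOp_X, map_mul, map_add, hp]; simp

lemma prod_X_pow_eq (α : Fin n → ℕ) :
    ∏ j : Fin n, (X j : MvPolynomial (Fin n) ℝ) ^ α j = monomial (fsupp α) 1 := by
  rw [monomial_eq, map_one, one_mul, Finsupp.prod]
  refine (Finset.prod_subset (Finset.subset_univ _) fun i _ hi => ?_).symm
  have h0 : α i = 0 := Finsupp.notMem_support_iff.mp hi
  rw [h0, pow_zero]


lemma coeff_shift (y : Fin n → ℝ) (p : MvPolynomial (Fin n) ℝ) (α : Fin n → ℕ) :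
    coeff (fsupp α) (shiftOp n y p) * (∏ j, ((α j).factorial : ℝ))
      = eval y (pderivPow n α p) := by
  have h := eval_zero_pderivPow α (shiftOp n y p)
  rw [pderivPow_shiftOp, eval_zero_shiftOp] at h
  rw [mul_comm]
  exact h.symm

lemma factorial_prod_ne (α : Fin n → ℕ) : (∏ j, ((α j).factorial : ℝ)) ≠ 0 := by
  positivity

end ShiftExp

open ShiftExp in
/-- **Multivariate expansion theorem**: a linear operator `Q` on `ℝ[x₁,…,xₙ]` is
shift-invariant iff `Q p = Σ_α a_α ∂^α p` (the sum taken over `|α| ≤ deg p`);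
in that case necessarily `a_α = (Q(x^α))(0)/α!`. -/
theorem shift_invariant_iff_expansion (n : ℕ)
    (Q : MvPolynomial (Fin n) ℝ →ₗ[ℝ] MvPolynomial (Fin n) ℝ) :
    ((∀ (y : Fin n → ℝ) (p : MvPolynomial (Fin n) ℝ),
        Q (shiftOp n y p) = shiftOp n y (Q p)) ↔
      (∃ a : (Fin n → ℕ) → ℝ, ∀ p : MvPolynomial (Fin n) ℝ,
        Q p = ∑ α ∈ (Fintype.piFinset fun _ : Fin n =>
                Finset.range (p.totalDegree + 1)).filter
                (fun α => ∑ j : Fin n, α j ≤ p.totalDegree),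
              a α • pderivPow n α p)) ∧
    (∀ a : (Fin n → ℕ) → ℝ,
      (∀ p : MvPolynomial (Fin n) ℝ,
        Q p = ∑ α ∈ (Fintype.piFinset fun _ : Fin n =>
                Finset.range (p.totalDegree + 1)).filter
                (fun α => ∑ j : Fin n, α j ≤ p.totalDegree),
              a α • pderivPow n α p) →
      ∀ α : Fin n → ℕ,
        a α = MvPolynomial.eval (0 : Fin n → ℝ) (Q (∏ j : Fin n, X j ^ α j))
                / ∏ j : Fin n, (Nat.factorial (α j) : ℝ)) := by
  have huniq : ∀ a : (Fin n → ℕ) → ℝ,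
      (∀ p : MvPolynomial (Fin n) ℝ,
        Q p = ∑ α ∈ idxSet n p.totalDegree, a α • pderivPow n α p) →
      ∀ α : Fin n → ℕ,
        a α = MvPolynomial.eval (0 : Fin n → ℝ) (Q (∏ j : Fin n, X j ^ α j))
                / ∏ j : Fin n, (Nat.factorial (α j) : ℝ) := by
    intro a h α
    have hp := h (monomial (fsupp α) 1)
    have hdeg : (monomial (fsupp α) 1 : MvPolynomial (Fin n) ℝ).totalDegree
        = ∑ j, α j := by
      rw [totalDegree_monomial _ (one_ne_zero), ← sum_fsupp]
      exact Finset.sum_congr rfl fun j _ => rfl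
    rw [hdeg] at hp
    have he := congrArg (eval (0 : Fin n → ℝ)) hp
    rw [map_sum] at he
    have hterm : ∀ β ∈ idxSet n (∑ j, α j),
        eval (0 : Fin n → ℝ) (a β • pderivPow n β (monomial (fsupp α) 1))
          = if α = β then a β * ∏ j, ((β j).factorial : ℝ) else 0 := by
      intro β _
      rw [smul_eval, eval_zero_pderivPow, coeff_monomial]
      by_cases hab : α = β
      · subst hab
        rw [if_pos rfl, if_pos rfl]
        ring
      · have hne : fsupp α ≠ fsupp β :=
          fun hh => hab (Finsupp.equivFunOnFinite.symm.injective hh)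
        rw [if_neg hne, if_neg hab]
        ring
    rw [Finset.sum_congr rfl hterm, Finset.sum_ite_eq] at he
    have hmem : α ∈ idxSet n (∑ j, α j) := by
      rw [idxSet, Finset.mem_filter, Fintype.mem_piFinset]
      exact ⟨fun j => Finset.mem_range.2 (Nat.lt_succ_of_le
        (Finset.single_le_sum (f := fun j => α j) (fun _ _ => Nat.zero_le _)
          (Finset.mem_univ j))), le_refl _⟩
    rw [if_pos hmem] at he
    rw [prod_X_pow_eq, he]
    field_simp
  constructor
  · constructor
    · -- shift invariance implies expansion
      intro hinv
      refine ⟨fun α => eval (0 : Fin n → ℝ) (Q (∏ j : Fin n, X j ^ α j))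
        / ∏ j : Fin n, ((α j).factorial : ℝ), fun p => ?_⟩
      apply MvPolynomial.funext
      intro y
      have hdeg : (shiftOp n y p).totalDegree ≤ p.totalDegree :=
        le_of_eq (totalDegree_shiftOp y p)
      have step1 : eval y (Q p)
          = ∑ α ∈ idxSet n p.totalDegree,
              coeff (fsupp α) (shiftOp n y p)
                * eval (0 : Fin n → ℝ) (Q (∏ j : Fin n, X j ^ α j)) := by
        rw [← eval_zero_shiftOp y (Q p), ← hinv]
        conv_lhs => rw [← sum_monomial_eq (shiftOp n y p) hdeg]
        rw [map_sum, map_sum]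
        refine Finset.sum_congr rfl fun α _ => ?_
        have : (monomial (fsupp α)) (coeff (fsupp α) (shiftOp n y p))
            = coeff (fsupp α) (shiftOp n y p) • (monomial (fsupp α)) (1 : ℝ) := by
          rw [smul_monomial, smul_eq_mul, mul_one]
        rw [this, map_smul, smul_eval, ← prod_X_pow_eq]
      rw [step1, map_sum]
      refine Finset.sum_congr rfl fun α _ => ?_
      rw [smul_eval, ← coeff_shift y p α]
      have hne := factorial_prod_ne α
      field_simp
    · -- expansion implies shift invariance
      rintro ⟨a, h⟩ y p
      rw [h (shiftOp n y p), h p, map_sum]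
      have hd := totalDegree_shiftOp y p
      rw [hd]
      refine Finset.sum_congr rfl fun α _ => ?_
      rw [map_smul, pderivPow_shiftOp]
  · exact huniq
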